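/- Let L be an even lattice, l ∈ L primitive isotropic with div(l) = 1, and L = (ℤl + ℤm) ⊕ L₁ as above. For every γ ∈ O(L) fixing l and inducing the identity on L₁ modulo ℤl (i.e., γ(v') ∈ v' + ℤl for all v' ∈ L₁), there exists a unique v ∈ L₁ such that γ = T_v; in particular γ(m) = m + v − ((v,v)/2)l and γ(v') = v' − (v,v')l for v' ∈ L₁. -/
import Mathlib


/-- Let `L` be an even lattice, `l` primitive isotropic with `div(l) = 1`
(witnessed by the hyperbolic partner `m`: `(m,m) = 0`, `(l,m) = 1`), and
`L₁ = (ℤl + ℤm)^⊥`.  For every isometry `γ` of `L` fixing `l` and inducing the identity on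
`L₁` modulo `ℤl` (i.e. `γ(v') ∈ v' + ℤl` for all `v' ∈ L₁`), there exists a unique `v ∈ L₁`
with `γ = T_v`; in particular `γ(m) = m + v − ((v,v)/2)·l` and `γ(v') = v' − (v,v')·l` for
all `v' ∈ L₁`. -/
theorem stmt_8
    (L : Type) [AddCommGroup L] [Module ℤ L]
    (B : L →ₗ[ℤ] L →ₗ[ℤ] ℤ)
    (hsymm : ∀ x y, B x y = B y x) (heven : ∀ x, Even (B x x))
    (l m : L) (hl : B l l = 0) (hm : B m m = 0) (hlm : B l m = 1)
    (γ : L ≃ₗ[ℤ] L)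
    (hγ : ∀ x y, B (γ x) (γ y) = B x y) (hγl : γ l = l)
    (hγ1 : ∀ v' : L, B l v' = 0 → B m v' = 0 → ∃ c : ℤ, γ v' = v' + c • l) :
    ∃! v : L, (B l v = 0 ∧ B m v = 0) ∧
      γ m = m + v - (B v v / 2) • l ∧
      ∀ v' : L, B l v' = 0 → B m v' = 0 → γ v' = v' - (B v v') • l := by
  have hml : B m l = 1 := by rw [hsymm]; exact hlm
  obtain ⟨a, ha⟩ : ∃ a : ℤ, a = B m (γ m) := ⟨_, rfl⟩
  obtain ⟨v, hv⟩ : ∃ v : L, v = γ m - m - a • l := ⟨_, rfl⟩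
  have hγm : γ m = m + v + a • l := by rw [hv]; abel
  have hlγm : B l (γ m) = 1 := by
    have := hγ l m; rwa [hγl, hlm] at this
  have hlv : B l v = 0 := by
    simp [hv, hlγm, hlm, hl]
  have hmv : B m v = 0 := by
    simp [hv, hm, hml, ha]
  have hvl : B v l = 0 := by rw [hsymm]; exact hlv
  have hvm : B v m = 0 := by rw [hsymm]; exact hmv
  -- from isotropy of γ m : B v v = -2a
  have hvv : B v v = -2 * a := by
    have h0 : B (γ m) (γ m) = 0 := by rw [hγ]; exact hm
    rw [hγm] at h0
    simp [hm, hml, hlm, hl, hmv, hvm, hvl, hlv, mul_comm] at h0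
    linarith
  have hdiv : B v v / 2 = -a := by rw [hvv]; omega
  have hγmv : γ m = m + v - (B v v / 2) • l := by
    rw [hγm, hdiv]
    simp only [neg_zsmul, sub_neg_eq_add]
  have hact : ∀ v' : L, B l v' = 0 → B m v' = 0 → γ v' = v' - (B v v') • l := by
    intro v' hlv' hmv'
    obtain ⟨c, hc⟩ := hγ1 v' hlv' hmv'
    have h1 : B (γ m) (γ v') = B m v' := hγ m v'
    rw [hγm, hc] at h1
    simp [hml, hvl, hl, hlv', hlm, hm, hmv'] at h1
    have hc' : c = -(B v v') := by linarith
    rw [hc, hc']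
    simp only [neg_zsmul, sub_eq_add_neg]
  refine ⟨v, ⟨⟨hlv, hmv⟩, hγmv, hact⟩, ?_⟩
  rintro w ⟨⟨hlw, hmw⟩, hγmw, -⟩
  have heq : m + w - (B w w / 2) • l = m + v - (B v v / 2) • l := by
    rw [← hγmw, ← hγmv]
  have h2 : B m (m + w - (B w w / 2) • l) = B m (m + v - (B v v / 2) • l) := by
    rw [heq]
  simp [hm, hmw, hmv, hml] at h2
  have : (B w w / 2 : ℤ) = B v v / 2 := by linarith
  have heq2 : w = v := by
    have := heq
    rw [‹(B w w / 2 : ℤ) = B v v / 2›] at this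
    have h3 : m + w - (B v v / 2) • l - (m - (B v v / 2) • l) =
        m + v - (B v v / 2) • l - (m - (B v v / 2) • l) := by rw [this]
    simpa using h3
  exact heq2
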